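/- For integers t and t', if there exists a matrix M in GL(2,ℤ) such that Mᵀ · χ_t · M = χ_{t'}, where χ_t is the 2×2 integer matrix with rows (t, 1) and (-1, 0), then t = t'. -/

import Mathlib

open Matrix

/-- The bilinear form `χ_t = [[t, 1], [-1, 0]]` on `ℤ²`. -/
def chi (t : ℤ) : Matrix (Fin 2) (Fin 2) ℤ := !![t, 1; -1, 0]

/-- If `χ_t` and `χ_{t'}` are equivalent via some `M ∈ GL(2, ℤ)`,
i.e. `Mᵀ * chi_t * M = chi_{t'}`, then `t = t'`. -/
theorem stmt0 (t t' : ℤ)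
    (h : ∃ M : Matrix.GeneralLinearGroup (Fin 2) ℤ,
      (M : Matrix (Fin 2) (Fin 2) ℤ)ᵀ * chi t * (M : Matrix (Fin 2) (Fin 2) ℤ) = chi t') :
    t = t' := by
  obtain ⟨M, h⟩ := h
  have h00 := congrFun (congrFun h 0) 0
  have h01 := congrFun (congrFun h 0) 1
  have h11 := congrFun (congrFun h 1) 1
  simp [chi, Matrix.mul_apply, Fin.sum_univ_two] at h00 h01 h11
  set a := (M : Matrix (Fin 2) (Fin 2) ℤ) 0 0 with ha
  set b := (M : Matrix (Fin 2) (Fin 2) ℤ) 0 1 with hb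
  set c := (M : Matrix (Fin 2) (Fin 2) ℤ) 1 0 with hc
  set d := (M : Matrix (Fin 2) (Fin 2) ℤ) 1 1 with hd
  -- h00 : (a*t - c)*a + a*c = t',  h01 : (a*t - c)*b + a*d = 1,  h11 : (b*t - d)*b + b*d = 0
  rcases eq_or_ne t 0 with rfl | ht
  · linarith
  · have hbb : t * (b * b) = 0 := by linear_combination h11
    have hb0 : b = 0 := by
      rcases mul_eq_zero.mp hbb with h' | h'
      · exact absurd h' ht
      · exact mul_self_eq_zero.mp h'
    rw [hb0] at h01
    have had : a * d = 1 := by linear_combination h01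
    have ha2 : a * a = 1 := by
      rcases Int.isUnit_iff.mp (IsUnit.of_mul_eq_one (a := a) d had) with h' | h' <;> rw [h'] <;> ring
    linear_combination h00 - t * ha2
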